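/- Let f : C → ℝ be weakly affinely differentiable at every point of the convex set C (i.e. for all x ∈ C, Df(x;·) exists and is affine on C). Then for all x, y ∈ C, the auxiliary function φ(t) = f((1−t)x + ty) is differentiable on [0,1], with φ'(t) = (1/(1−t)) Df(x_t; y) = −(1/t) Df(x_t; x) for t ∈ (0,1), φ'₊(0) = Df(x;y), and φ'₋(1) = −Df(y;x), where x_t = (1−t)x + ty. -/

import Mathlib

open Set Filter Topology

/-- a wa-differentiable function is hemidifferentiable, with
`φ'(t) = (1/(1−t)) Df(x_t;y) = −(1/t) Df(x_t;x)` on `(0,1)`, `φ'₊(0) = Df(x;y)`,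
and `φ'₋(1) = −Df(y;x)`, where `φ(t) = f((1−t)x + ty)`. -/
theorem stmt_5 {X : Type*} [AddCommGroup X] [Module ℝ X]
    (C : Set X) (hC : Convex ℝ C) (f : X → ℝ) (D : X → X → ℝ)
    (hD : ∀ x ∈ C, ∀ y ∈ C,
      Tendsto (fun t : ℝ => (f ((1 - t) • x + t • y) - f x) / t)
        (𝓝[>] 0) (𝓝 (D x y)))
    (haff : ∀ x ∈ C, ∀ y ∈ C, ∀ z ∈ C, ∀ t ∈ Set.Icc (0:ℝ) 1,
      D x ((1 - t) • y + t • z) = (1 - t) * D x y + t * D x z)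
    (x y : X) (hx : x ∈ C) (hy : y ∈ C) :
    (∀ t ∈ Set.Ioo (0:ℝ) 1,
      HasDerivAt (fun s : ℝ => f ((1 - s) • x + s • y))
        ((1 - t)⁻¹ * D ((1 - t) • x + t • y) y) t ∧
      (1 - t)⁻¹ * D ((1 - t) • x + t • y) y =
        -(t⁻¹ * D ((1 - t) • x + t • y) x)) ∧
    HasDerivWithinAt (fun s : ℝ => f ((1 - s) • x + s • y)) (D x y) (Set.Ici 0) 0 ∧
    HasDerivWithinAt (fun s : ℝ => f ((1 - s) • x + s • y)) (-(D y x)) (Set.Iic 1) 1 := by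
  set φ : ℝ → ℝ := fun s : ℝ => f ((1 - s) • x + s • y) with hφ
  have hmem : ∀ t ∈ Icc (0:ℝ) 1, (1 - t) • x + t • y ∈ C := fun t ht =>
    hC hx hy (by linarith [ht.2]) ht.1 (by ring)
  -- D z z = 0
  have hzero : ∀ z ∈ C, D z z = 0 := by
    intro z hz
    have h1 := hD z hz z hz
    have h2 : (fun t : ℝ => (f ((1 - t) • z + t • z) - f z) / t) = fun _ => (0:ℝ) := by
      funext t
      have hz' : (1 - t) • z + t • z = z := by module
      rw [hz']; simp
    rw [h2] at h1
    exact (tendsto_nhds_unique tendsto_const_nhds h1).symm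
  -- right derivatives
  have hright : ∀ t ∈ Ico (0:ℝ) 1,
      HasDerivWithinAt φ ((1 - t)⁻¹ * D ((1 - t) • x + t • y) y) (Ici t) t := by
    intro t ht
    have h1t : (0:ℝ) < 1 - t := by linarith [ht.2]
    set a := (1 - t) • x + t • y with ha
    have haC : a ∈ C := hmem t ⟨ht.1, ht.2.le⟩
    have hm : Tendsto (fun s : ℝ => (s - t) / (1 - t)) (𝓝[>] t) (𝓝[>] 0) := by
      apply tendsto_nhdsWithin_of_tendsto_nhds_of_eventually_within
      · have h := (((continuous_sub_right t).div_const (1 - t)).tendsto t)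
        simp only [sub_self, zero_div] at h
        exact h.mono_left nhdsWithin_le_nhds
      · filter_upwards [self_mem_nhdsWithin] with s hs
        exact div_pos (by simpa using sub_pos.2 (show t < s from hs)) h1t
    have hcomp := ((hD a haC y hy).comp hm).const_mul (1 - t)⁻¹
    rw [hasDerivWithinAt_iff_tendsto_slope, Ici_sdiff_left]
    refine Tendsto.congr' ?_ hcomp
    filter_upwards [self_mem_nhdsWithin] with s hs
    have hst : t < s := hs
    have hpoint : (1 - (s - t)/(1 - t)) • a + ((s - t)/(1 - t)) • y
        = (1 - s) • x + s • y := by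
      rw [ha]; match_scalars <;> (field_simp; try ring)
    have hfa : f ((1 - t) • x + t • y) = f a := by rw [ha]
    simp only [Function.comp_apply, slope_def_field, hφ, hpoint, hfa]
    have h1t' : (1:ℝ) - t ≠ 0 := ne_of_gt h1t
    have hst' : s - t ≠ 0 := sub_ne_zero.2 (ne_of_gt hst)
    field_simp
    try ring
  -- left derivatives
  have hleft : ∀ t ∈ Ioc (0:ℝ) 1,
      HasDerivWithinAt φ (-(t⁻¹ * D ((1 - t) • x + t • y) x)) (Iic t) t := by
    intro t ht
    have h0t : (0:ℝ) < t := ht.1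
    set a := (1 - t) • x + t • y with ha
    have haC : a ∈ C := hmem t ⟨ht.1.le, ht.2⟩
    have hm : Tendsto (fun s : ℝ => (t - s) / t) (𝓝[<] t) (𝓝[>] 0) := by
      apply tendsto_nhdsWithin_of_tendsto_nhds_of_eventually_within
      · have h := (((continuous_const.sub continuous_id').div_const t).tendsto t : Tendsto (fun s : ℝ => (t - s)/t) (𝓝 t) _)
        simp only [Pi.sub_apply, sub_self, zero_div] at h
        exact h.mono_left nhdsWithin_le_nhds
      · filter_upwards [self_mem_nhdsWithin] with s hs
        exact div_pos (by simpa using sub_pos.2 (show s < t from hs)) h0t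
    have hcomp := ((hD a haC x hx).comp hm).const_mul (-(t⁻¹))
    rw [hasDerivWithinAt_iff_tendsto_slope, Iic_sdiff_right]
    have hval : -(t⁻¹) * D a x = -(t⁻¹ * D a x) := by ring
    rw [← hval]
    refine Tendsto.congr' ?_ hcomp
    filter_upwards [self_mem_nhdsWithin] with s hs
    have hst : s < t := hs
    have hpoint : (1 - (t - s)/t) • a + ((t - s)/t) • x
        = (1 - s) • x + s • y := by
      rw [ha]; match_scalars <;> (field_simp; try ring)
    have hfa : f ((1 - t) • x + t • y) = f a := by rw [ha]
    simp only [Function.comp_apply, slope_def_field, hφ, hpoint, hfa]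
    have h0t' : t ≠ 0 := ne_of_gt h0t
    have hst' : s - t ≠ 0 := sub_ne_zero.2 (ne_of_lt hst)
    have hts' : t - s ≠ 0 := sub_ne_zero.2 (ne_of_gt hst)
    field_simp
    try ring
  refine ⟨?_, ?_, ?_⟩
  · intro t ht
    set a := (1 - t) • x + t • y with ha
    have haC : a ∈ C := hmem t ⟨ht.1.le, ht.2.le⟩
    have hbal : (1 - t) * D a x + t * D a y = 0 := by
      have h := haff a haC x hx y hy t ⟨ht.1.le, ht.2.le⟩
      rw [← ha, hzero a haC] at h
      linarith
    have heq : (1 - t)⁻¹ * D a y = -(t⁻¹ * D a x) := by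
      have h1t : (1:ℝ) - t ≠ 0 := by linarith [ht.2]
      have h0t : t ≠ 0 := ne_of_gt ht.1
      field_simp
      linarith
    refine ⟨?_, heq⟩
    have hR := hright t ⟨ht.1.le, ht.2⟩
    have hL := hleft t ⟨ht.1, ht.2.le⟩
    rw [← ha] at hR hL
    rw [heq] at hR
    have := hL.union hR
    rw [Iic_union_Ici] at this
    rw [← heq] at this
    exact this.hasDerivAt univ_mem
  · have h := hright 0 ⟨le_refl 0, one_pos⟩
    simpa using h
  · have h := hleft 1 ⟨one_pos, le_refl 1⟩
    simpa using h
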